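/- (Key inequality of the fair primal dual method, Condat–Vũ case.) Let E be a real inner product space, f₁ : E → ℝ convex and differentiable with L-Lipschitz continuous gradient (L > 0), h : E → ℝ and φ : E → ℝ convex, and σ, τ > 0. Given x₀, y₀ ∈ E, suppose x̂ minimizes x ↦ h(x) + (1/(2σ))‖x − (x₀ − σ(y₀ + ∇f₁(x₀)))‖², and y' minimizes y ↦ φ(y) + (1/(2τ))‖y − (y₀ + τ(2x̂ − x₀))‖². Then for all x, y ∈ E: [f₁(x̂) + h(x̂) + φ(y')] − [f₁(x) + h(x) + φ(y)] − (⟨x − x̂, y'⟩ − ⟨y − y', x̂⟩) ≤ (1/2)‖(x − x₀, y − y₀)‖_Q² − (1/2)‖(x − x̂, y − y')‖_Q² − (1/2)‖(x̂ − x₀, y' − y₀)‖_M², where ‖(a,b)‖_Q² := (1/σ)‖a‖² − 2⟨a,b⟩ + (1/τ)‖b‖² and ‖(a,b)‖_M² := (1/σ − L)‖a‖² − 2⟨a,b⟩ + (1/τ)‖b‖². -/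

import Mathlib

open RealInnerProductSpace

section Aux

variable {E : Type*} [NormedAddCommGroup E] [InnerProductSpace ℝ E] [CompleteSpace E]

lemma line_hasDerivAt (f : E → ℝ) (g : E → E) (hdiff : ∀ x, HasGradientAt f (g x) x)
    (a d : E) (t : ℝ) :
    HasDerivAt (fun s : ℝ => f (a + s • d)) ⟪g (a + t • d), d⟫ t := by
  have hline : HasDerivAt (fun s : ℝ => a + s • d) d t := by
    simpa using ((hasDerivAt_id t).smul_const d).const_add a
  have hf := (hdiff (a + t • d)).hasFDerivAt
  have := hf.comp_hasDerivAt t hline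
  simpa [Function.comp_def] using this

lemma convex_grad_ineq (f : E → ℝ) (g : E → E) (hconv : ConvexOn ℝ Set.univ f)
    (hdiff : ∀ x, HasGradientAt f (g x) x) (a b : E) :
    f a + ⟪g a, b - a⟫ ≤ f b := by
  set d := b - a with hd
  have hψ : HasDerivAt (fun s : ℝ => f (a + s • d)) ⟪g a, d⟫ 0 := by
    simpa using line_hasDerivAt f g hdiff a d 0
  have hslope := hasDerivAt_iff_tendsto_slope.mp hψ
  have h2 : Filter.Tendsto (slope (fun s : ℝ => f (a + s • d)) 0) (nhdsWithin 0 (Set.Ioi 0))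
      (nhds ⟪g a, d⟫) :=
    hslope.mono_left (nhdsWithin_mono 0 (fun t ht => ne_of_gt ht))
  have hb : ∀ᶠ t in nhdsWithin (0:ℝ) (Set.Ioi 0),
      slope (fun s : ℝ => f (a + s • d)) 0 t ≤ f b - f a := by
    filter_upwards [Ioc_mem_nhdsGT_of_mem (Set.mem_Ico.mpr ⟨le_rfl, zero_lt_one⟩)] with t ht
    have hmem : a + t • d = (1 - t) • a + t • b := by
      rw [hd, smul_sub, sub_smul, one_smul]; abel
    have hcv := hconv.2 (Set.mem_univ a) (Set.mem_univ b)
      (by linarith [ht.2] : (0:ℝ) ≤ 1 - t) (le_of_lt ht.1) (by ring)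
    rw [smul_eq_mul, smul_eq_mul] at hcv
    have ht0 : (0:ℝ) < t := ht.1
    rw [slope_def_field]
    simp only [sub_zero, zero_smul, add_zero]
    rw [div_le_iff₀ ht0]
    have : f (a + t • d) ≤ (1 - t) * f a + t * f b := by rw [hmem]; exact hcv
    nlinarith [this]
  have := le_of_tendsto h2 hb
  linarith

lemma descent_lemma (f : E → ℝ) (g : E → E) (L : ℝ)
    (hdiff : ∀ x, HasGradientAt f (g x) x)
    (hlip : ∀ x y, ‖g x - g y‖ ≤ L * ‖x - y‖) (a b : E) :
    f b ≤ f a + ⟪g a, b - a⟫ + L / 2 * ‖b - a‖ ^ 2 := by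
  set d := b - a with hd
  set u : ℝ → ℝ := fun t => f (a + t • d) - ⟪g a, d⟫ * t - (L / 2 * ‖d‖ ^ 2) * t ^ 2 with hu
  have hu' : ∀ t : ℝ, HasDerivAt u
      (⟪g (a + t • d), d⟫ - ⟪g a, d⟫ - (L / 2 * ‖d‖ ^ 2) * (2 * t)) t := by
    intro t
    have h1 := line_hasDerivAt f g hdiff a d t
    have h2 : HasDerivAt (fun s : ℝ => ⟪g a, d⟫ * s) ⟪g a, d⟫ t := by
      simpa using (hasDerivAt_id t).const_mul ⟪g a, d⟫
    have h3 : HasDerivAt (fun s : ℝ => (L / 2 * ‖d‖ ^ 2) * s ^ 2)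
        ((L / 2 * ‖d‖ ^ 2) * (2 * t)) t := by
      have := (hasDerivAt_pow 2 t).const_mul (L / 2 * ‖d‖ ^ 2)
      simpa [pow_one] using this
    exact (h1.sub h2).sub h3
  have hdiffu : Differentiable ℝ u := fun t => (hu' t).differentiableAt
  have hanti : AntitoneOn u (Set.Icc 0 1) := by
    apply antitoneOn_of_deriv_nonpos (convex_Icc 0 1) hdiffu.continuous.continuousOn
      hdiffu.differentiableOn
    intro t ht
    rw [interior_Icc] at ht
    rw [(hu' t).deriv]
    have hinner : ⟪g (a + t • d), d⟫ - ⟪g a, d⟫ = ⟪g (a + t • d) - g a, d⟫ := by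
      rw [inner_sub_left]
    have hub := real_inner_le_norm (g (a + t • d) - g a) d
    have hl := hlip (a + t • d) a
    have hnorm : ‖a + t • d - a‖ = t * ‖d‖ := by
      rw [add_sub_cancel_left, norm_smul, Real.norm_eq_abs, abs_of_pos ht.1]
    rw [hnorm] at hl
    have hd0 : (0:ℝ) ≤ ‖d‖ := norm_nonneg d
    nlinarith [hub, mul_le_mul_of_nonneg_right hl hd0, hinner]
  have h01 := hanti (Set.mem_Icc.mpr ⟨le_rfl, zero_le_one⟩)
    (Set.mem_Icc.mpr ⟨zero_le_one, le_rfl⟩) zero_le_one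
  have hab : a + (1:ℝ) • d = b := by rw [one_smul, hd]; abel
  have h0 : a + (0:ℝ) • d = a := by simp
  simp only [hu, hab, h0, one_pow, mul_one] at h01
  have h00 : (0:ℝ) ^ 2 = 0 := by norm_num
  nlinarith [h01]

lemma prox_subgrad (h : E → ℝ) (hconv : ConvexOn ℝ Set.univ h) (σ : ℝ) (hσ : 0 < σ)
    (p xm : E)
    (hmin : ∀ x, h xm + 1 / (2 * σ) * ‖xm - p‖ ^ 2 ≤ h x + 1 / (2 * σ) * ‖x - p‖ ^ 2) :
    ∀ x, h xm + (1 / σ) * ⟪p - xm, x - xm⟫ ≤ h x := by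
  intro x
  set C : ℝ := h x - h xm + (1 / σ) * ⟪xm - p, x - xm⟫ with hC
  set D : ℝ := 1 / (2 * σ) * ‖x - xm‖ ^ 2 with hD
  have claim : ∀ t ∈ Set.Ioc (0:ℝ) 1, 0 ≤ C + t * D := by
    intro t ht
    have hmem : xm + t • (x - xm) = (1 - t) • xm + t • x := by
      rw [smul_sub, sub_smul, one_smul]; abel
    have hcv := hconv.2 (Set.mem_univ xm) (Set.mem_univ x)
      (by linarith [ht.2] : (0:ℝ) ≤ 1 - t) (le_of_lt ht.1) (by ring)
    rw [smul_eq_mul, smul_eq_mul] at hcv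
    have hcvx : h (xm + t • (x - xm)) ≤ (1 - t) * h xm + t * h x := by rw [hmem]; exact hcv
    have hmin' := hmin (xm + t • (x - xm))
    have hexp : ‖xm + t • (x - xm) - p‖ ^ 2 =
        ‖xm - p‖ ^ 2 + 2 * (t * ⟪xm - p, x - xm⟫) + t ^ 2 * ‖x - xm‖ ^ 2 := by
      have : xm + t • (x - xm) - p = (xm - p) + t • (x - xm) := by abel
      rw [this, norm_add_sq_real, real_inner_smul_right, norm_smul, mul_pow,
        Real.norm_eq_abs, sq_abs]
    rw [hexp] at hmin'
    have hσ' : (0:ℝ) < 2 * σ := by linarith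
    have key : 0 ≤ t * (h x - h xm) + t * ((1 / σ) * ⟪xm - p, x - xm⟫) + t ^ 2 * D := by
      have e1 : 1 / (2 * σ) * (2 * (t * ⟪xm - p, x - xm⟫)) = t * ((1 / σ) * ⟪xm - p, x - xm⟫) := by
        field_simp
      nlinarith [hmin', hcvx]
    have : 0 ≤ t * (C + t * D) := by rw [hC]; nlinarith [key]
    exact nonneg_of_mul_nonneg_right this ht.1
  have hDcont : Filter.Tendsto (fun t : ℝ => C + t * D) (nhdsWithin 0 (Set.Ioi 0)) (nhds C) := by
    have : Filter.Tendsto (fun t : ℝ => C + t * D) (nhds 0) (nhds (C + 0 * D)) := by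
      exact (continuous_const.add (continuous_id.mul continuous_const)).tendsto 0
    simpa using this.mono_left nhdsWithin_le_nhds
  have hev : ∀ᶠ t in nhdsWithin (0:ℝ) (Set.Ioi 0), 0 ≤ C + t * D := by
    filter_upwards [Ioc_mem_nhdsGT_of_mem (Set.mem_Ico.mpr ⟨le_rfl, zero_lt_one⟩)] with t ht
    exact claim t ht
  have hC0 : 0 ≤ C := ge_of_tendsto hDcont hev
  have hneg : ⟪p - xm, x - xm⟫ = -⟪xm - p, x - xm⟫ := by
    rw [← neg_sub xm p, inner_neg_left]
  rw [hneg]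
  rw [hC] at hC0
  linarith

end Aux

theorem stmt_7 {E : Type*} [NormedAddCommGroup E] [InnerProductSpace ℝ E] [CompleteSpace E]
    (f₁ h φ : E → ℝ) (f₁' : E → E) (L : ℝ) (hL : 0 < L)
    (hf₁conv : ConvexOn ℝ Set.univ f₁)
    (hf₁diff : ∀ x, HasGradientAt f₁ (f₁' x) x)
    (hf₁lip : ∀ x y, ‖f₁' x - f₁' y‖ ≤ L * ‖x - y‖)
    (hhconv : ConvexOn ℝ Set.univ h)
    (hφconv : ConvexOn ℝ Set.univ φ)
    (σ τ : ℝ) (hσ : 0 < σ) (hτ : 0 < τ) (x₀ y₀ xhat y' : E)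
    (hxhat : ∀ x : E,
      h xhat + 1 / (2 * σ) * ‖xhat - (x₀ - σ • (y₀ + f₁' x₀))‖ ^ 2 ≤
      h x + 1 / (2 * σ) * ‖x - (x₀ - σ • (y₀ + f₁' x₀))‖ ^ 2)
    (hy' : ∀ y : E,
      φ y' + 1 / (2 * τ) * ‖y' - (y₀ + τ • (2 • xhat - x₀))‖ ^ 2 ≤
      φ y + 1 / (2 * τ) * ‖y - (y₀ + τ • (2 • xhat - x₀))‖ ^ 2) :
    ∀ x y : E,
      (f₁ xhat + h xhat + φ y') - (f₁ x + h x + φ y) - (⟪x - xhat, y'⟫ - ⟪y - y', xhat⟫) ≤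
        1 / 2 * ((1 / σ) * ‖x - x₀‖ ^ 2 - 2 * ⟪x - x₀, y - y₀⟫ + (1 / τ) * ‖y - y₀‖ ^ 2)
        - 1 / 2 * ((1 / σ) * ‖x - xhat‖ ^ 2 - 2 * ⟪x - xhat, y - y'⟫ + (1 / τ) * ‖y - y'‖ ^ 2)
        - 1 / 2 * ((1 / σ - L) * ‖xhat - x₀‖ ^ 2 - 2 * ⟪xhat - x₀, y' - y₀⟫
            + (1 / τ) * ‖y' - y₀‖ ^ 2) := by
  intro x y
  have hA := prox_subgrad h hhconv σ hσ (x₀ - σ • (y₀ + f₁' x₀)) xhat hxhat x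
  have hB := prox_subgrad φ hφconv τ hτ (y₀ + τ • (2 • xhat - x₀)) y' hy' y
  have hC := convex_grad_ineq f₁ f₁' hf₁conv hf₁diff x₀ x
  have hD := descent_lemma f₁ f₁' L hf₁diff hf₁lip x₀ xhat
  set g := f₁' x₀ with hg
  have e1 : (1 / σ) * ⟪x₀ - σ • (y₀ + g) - xhat, x - xhat⟫ =
      (1 / σ) * ⟪x₀ - xhat, x - xhat⟫ - ⟪y₀ + g, x - xhat⟫ := by
    simp only [inner_sub_left, real_inner_smul_left]
    field_simp
    ring
  have e2 : (1 / τ) * ⟪y₀ + τ • (2 • xhat - x₀) - y', y - y'⟫ =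
      (1 / τ) * ⟪y₀ - y', y - y'⟫ + ⟪(2:ℕ) • xhat - x₀, y - y'⟫ := by
    simp only [inner_sub_left, inner_add_left, real_inner_smul_left]
    field_simp
    ring
  rw [e1] at hA
  rw [e2] at hB
  simp only [← real_inner_self_eq_norm_sq, two_smul, inner_sub_left, inner_sub_right,
    inner_add_left, inner_add_right, real_inner_smul_left, real_inner_smul_right] at hA hB hC hD ⊢
  simp only [real_inner_comm x₀ x, real_inner_comm xhat x, real_inner_comm y x, real_inner_comm y₀ x, real_inner_comm y' x, real_inner_comm g x, real_inner_comm xhat x₀, real_inner_comm y x₀, real_inner_comm y₀ x₀, real_inner_comm y' x₀, real_inner_comm g x₀, real_inner_comm y xhat, real_inner_comm y₀ xhat, real_inner_comm y' xhat, real_inner_comm g xhat, real_inner_comm y₀ y, real_inner_comm y' y, real_inner_comm g y, real_inner_comm y' y₀, real_inner_comm g y₀, real_inner_comm g y'] at hA hB hC hD ⊢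
  linarith [hA, hB, hC, hD]
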